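/- Let δ ∈ [0,1) and α > −δ, and define p_s = ((1−δ)/(α+1)) · ∏_{l=1}^{s} (α+δl)/(α+δl+1) for s ∈ ℕ. Then ∑_{s=0}^∞ p_s = 1. -/

import Mathlib

open Finset Filter Topology

/-- For `δ ∈ [0,1)` and `α > -δ`, the expected total weights per scale
`p s = ((1-δ)/(α+1)) ∏_{l=1}^s (α+δl)/(α+δl+1)` sum to one. -/
theorem expected_scale_weights_sum_to_one
    (δ α : ℝ) (hδ0 : 0 ≤ δ) (hδ1 : δ < 1) (hα : -δ < α) :
    ∑' s : ℕ,
        (1 - δ) / (α + 1) * ∏ l ∈ Finset.Icc 1 s, (α + δ * l) / (α + δ * l + 1) = 1 := by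
  have hδpos : (0:ℝ) < 1 - δ := by linarith
  have hα1 : (0:ℝ) < α + 1 := by linarith
  have hαδ : (0:ℝ) < α + δ := by linarith
  have hpos : ∀ l : ℕ, 1 ≤ l → 0 < α + δ * l := by
    intro l hl
    have h1 : (1:ℝ) ≤ (l:ℝ) := by exact_mod_cast hl
    nlinarith
  have hpos1 : ∀ l : ℕ, 0 < α + δ * l + 1 := by
    intro l
    have h0 : (0:ℝ) ≤ (l:ℝ) := Nat.cast_nonneg l
    nlinarith
  set f : ℕ → ℝ := fun s =>
    (1 - δ) / (α + 1) * ∏ l ∈ Finset.Icc 1 s, (α + δ * l) / (α + δ * l + 1) with hf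
  have hprodnonneg : ∀ s : ℕ, 0 ≤ ∏ l ∈ Finset.Icc 1 s, (α + δ * l) / (α + δ * l + 1) := by
    intro s
    apply Finset.prod_nonneg
    intro l hl
    have hl1 : 1 ≤ l := (Finset.mem_Icc.1 hl).1
    exact le_of_lt (div_pos (hpos l hl1) (hpos1 l))
  have hfnonneg : ∀ s, 0 ≤ f s := by
    intro s
    exact mul_nonneg (le_of_lt (div_pos hδpos hα1)) (hprodnonneg s)
  set T : ℕ → ℝ := fun n =>
    (α + δ * (n + 1)) / (α + 1) * ∏ l ∈ Finset.Icc 1 n, (α + δ * l) / (α + δ * l + 1) with hT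
  -- partial sums telescope
  have hsum : ∀ n : ℕ, ∑ s ∈ Finset.range (n + 1), f s = 1 - T n := by
    intro n
    induction n with
    | zero =>
        simp only [hf, hT, zero_add, Finset.sum_range_one, Nat.cast_zero]
        rw [show Finset.Icc 1 0 = (∅ : Finset ℕ) by rfl]
        simp only [Finset.prod_empty, mul_one]
        field_simp
        ring
    | succ n ih =>
        rw [Finset.sum_range_succ, ih]
        have hnz1 : α + δ * ((n:ℝ) + 1) + 1 ≠ 0 := by
          have := hpos1 (n + 1); push_cast at this; linarith
        have hstep : f (n + 1) = T n - T (n + 1) := by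
          simp only [hf, hT]
          rw [Finset.prod_Icc_succ_top (Nat.le_add_left 1 n)]
          generalize (∏ l ∈ Finset.Icc 1 n, (α + δ * l) / (α + δ * l + 1)) = c
          push_cast
          field_simp
          ring
        rw [hstep]; ring
  set D : ℕ → ℝ := fun n =>
    ∏ l ∈ Finset.Icc 1 n, (α + δ * l + δ) / (α + δ * l + 1) with hD
  have hTD : ∀ n : ℕ, T n = (α + δ) / (α + 1) * D n := by
    intro n
    induction n with
    | zero => simp [hT, hD]
    | succ n ih =>
        have hrecT : T (n + 1) = T n * ((α + δ * (n+1) + δ) / (α + δ * (n+1) + 1)) := by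
          simp only [hT]
          rw [Finset.prod_Icc_succ_top (Nat.le_add_left 1 n)]
          generalize (∏ l ∈ Finset.Icc 1 n, (α + δ * l) / (α + δ * l + 1)) = c
          push_cast
          ring
        have hrecD : D (n + 1) = D n * ((α + δ * (n+1) + δ) / (α + δ * (n+1) + 1)) := by
          simp only [hD]
          rw [Finset.prod_Icc_succ_top (Nat.le_add_left 1 n)]
          push_cast; ring
        rw [hrecT, hrecD, ih]; ring
  -- bound D by an exponential
  have hDle : ∀ n : ℕ,
      D n ≤ Real.exp (-∑ l ∈ Finset.Icc 1 n, (1 - δ) / (α + δ * l + 1)) := by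
    intro n
    have : ∀ l ∈ Finset.Icc 1 n,
        (α + δ * l + δ) / (α + δ * l + 1) ≤ Real.exp (-((1 - δ) / (α + δ * l + 1))) := by
      intro l hl
      have h1 : (α + δ * l + δ) / (α + δ * l + 1) = 1 - (1 - δ) / (α + δ * l + 1) := by
        have := hpos1 l
        field_simp
        ring
      rw [h1]
      have := Real.add_one_le_exp (-((1 - δ) / (α + δ * l + 1)))
      linarith
    calc D n ≤ ∏ l ∈ Finset.Icc 1 n, Real.exp (-((1 - δ) / (α + δ * l + 1))) := by
          apply Finset.prod_le_prod
          · intro l hl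
            have hl1 : 1 ≤ l := (Finset.mem_Icc.1 hl).1
            have h1 : 0 < α + δ * l + δ := by
              have h2 := hpos l hl1; linarith
            exact le_of_lt (div_pos h1 (hpos1 l))
          · exact this
      _ = Real.exp (-∑ l ∈ Finset.Icc 1 n, (1 - δ) / (α + δ * l + 1)) := by
          rw [← Real.exp_sum, ← Finset.sum_neg_distrib]
  -- the exponent sum tends to infinity
  have hIcc : ∀ (g : ℕ → ℝ) (n : ℕ),
      ∑ l ∈ Finset.Icc 1 n, g l = ∑ i ∈ Finset.range n, g (i + 1) := by
    intro g n
    induction n with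
    | zero => rfl
    | succ n ih =>
        rw [Finset.sum_Icc_succ_top (Nat.le_add_left 1 n), Finset.sum_range_succ, ih]
  have hK : Tendsto (fun n : ℕ => ∑ l ∈ Finset.Icc 1 n, (1 - δ) / (α + δ * l + 1)) atTop atTop := by
    set k : ℝ := (1 - δ) / (α + δ + 1) with hk
    have hkpos : 0 < k := div_pos hδpos (by linarith)
    have hbound : ∀ n : ℕ, k * ∑ i ∈ Finset.range n, (1:ℝ) / (i + 1)
        ≤ ∑ l ∈ Finset.Icc 1 n, (1 - δ) / (α + δ * l + 1) := by
      intro n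
      rw [Finset.mul_sum, hIcc (fun l => (1 - δ) / (α + δ * l + 1)) n]
      apply Finset.sum_le_sum
      intro i _
      have hi0 : (0:ℝ) ≤ (i:ℝ) := Nat.cast_nonneg i
      have hden1 : (0:ℝ) < α + δ * ((i:ℕ) + 1 : ℕ) + 1 := hpos1 (i + 1)
      push_cast at hden1 ⊢
      rw [hk, div_mul_div_comm, mul_one]
      apply div_le_div_of_nonneg_left (le_of_lt hδpos) hden1
      nlinarith
    apply tendsto_atTop_mono hbound
    exact Tendsto.const_mul_atTop hkpos Real.tendsto_sum_range_one_div_nat_succ_atTop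
  -- T tends to 0
  have hTnonneg : ∀ n, 0 ≤ T n := by
    intro n
    apply mul_nonneg _ (hprodnonneg n)
    have h1 : 0 < α + δ * ((n:ℝ) + 1) := by
      have := hpos (n + 1) (Nat.le_add_left 1 n); push_cast at this; exact this
    exact le_of_lt (div_pos h1 hα1)
  have hexp : Tendsto (fun n : ℕ => (α + δ) / (α + 1) *
      Real.exp (-∑ l ∈ Finset.Icc 1 n, (1 - δ) / (α + δ * l + 1))) atTop (𝓝 0) := by
    have h1 : Tendsto (fun n : ℕ => -∑ l ∈ Finset.Icc 1 n, (1 - δ) / (α + δ * l + 1))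
        atTop atBot := tendsto_neg_atTop_atBot.comp hK
    have h2 := Real.tendsto_exp_atBot.comp h1
    have h3 := h2.const_mul ((α + δ) / (α + 1))
    rw [mul_zero] at h3
    exact h3
  have hT0 : Tendsto T atTop (𝓝 0) := by
    apply squeeze_zero hTnonneg _ hexp
    intro n
    rw [hTD n]
    apply mul_le_mul_of_nonneg_left (hDle n)
    exact le_of_lt (div_pos hαδ hα1)
  -- conclude
  have htend : Tendsto (fun n : ℕ => ∑ s ∈ Finset.range n, f s) atTop (𝓝 1) := by
    rw [← tendsto_add_atTop_iff_nat 1]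
    simp only [hsum]
    have := hT0.const_sub 1
    simpa using this
  exact ((hasSum_iff_tendsto_nat_of_nonneg hfnonneg 1).2 htend).tsum_eq
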